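/- arXiv:2210.04360 — 5 statements merged into one kernel-verified Lean document; each statement's English description precedes it below -/
import Mathlib

section
/- Let A be a Bernoulli(π) random variable and X a random vector independent of A with E(X)=0, and Y a square-integrable random variable. Let (α,β,γ,δ) minimize E[(Y − α − βA − γᵀX − A δᵀX)²] over all α,β ∈ ℝ and γ,δ ∈ ℝᵖ. Then β = E(Y | A=1) − E(Y | A=0). -/
open MeasureTheory ProbabilityTheory

open scoped ENNReal

lemma quad_min (a b : ℝ) (ha : 0 ≤ a) (h : ∀ t : ℝ, 0 ≤ a * t ^ 2 + b * t) : b = 0 := by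
  have h2 : 0 < a + 1 := by linarith
  have e : a * (-b / (a + 1)) ^ 2 + b * (-b / (a + 1)) = -(b ^ 2) / (a + 1) ^ 2 := by
    field_simp
    ring
  have h1 := h (-b / (a + 1))
  rw [e] at h1
  have h3 := mul_nonneg h1 (by positivity : (0:ℝ) ≤ (a + 1) ^ 2)
  rw [div_mul_cancel₀ _ (by positivity : ((a:ℝ) + 1) ^ 2 ≠ 0)] at h3
  nlinarith

lemma l2_mul_int {Ω : Type*} [MeasurableSpace Ω] {μ : Measure Ω} {f g : Ω → ℝ}
    (hf : MemLp f 2 μ) (hg : MemLp g 2 μ) : Integrable (fun ω => f ω * g ω) μ := by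
  have h : (1 : ℝ≥0∞) / 1 = 1 / 2 + 1 / 2 := by rw [ENNReal.add_halves]; simp
  have := hf.smul hg (r := (1 : ℝ≥0∞)) (hpqr := ⟨by simpa [one_div] using h.symm⟩)
  simpa [smul_eq_mul, mul_comm] using (memLp_one_iff_integrable.mp this : Integrable (fun ω => g ω • f ω) μ)

lemma normal_eq {Ω : Type*} [MeasurableSpace Ω] (μ : Measure Ω) (R g : Ω → ℝ)
    (hR : MemLp R 2 μ) (hg : MemLp g 2 μ)
    (h : ∀ t : ℝ, ∫ ω, R ω ^ 2 ∂μ ≤ ∫ ω, (R ω - t * g ω) ^ 2 ∂μ) :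
    ∫ ω, R ω * g ω ∂μ = 0 := by
  have hRg := l2_mul_int hR hg
  have hg2 := hg.integrable_sq
  have hR2 := hR.integrable_sq
  have key : ∀ t : ℝ, ∫ ω, (R ω - t * g ω) ^ 2 ∂μ
      = ∫ ω, R ω ^ 2 ∂μ - 2 * t * ∫ ω, R ω * g ω ∂μ + t ^ 2 * ∫ ω, g ω ^ 2 ∂μ := by
    intro t
    have e : (fun ω => (R ω - t * g ω) ^ 2)
        = fun ω => (R ω ^ 2 - 2 * t * (R ω * g ω)) + t ^ 2 * g ω ^ 2 := by
      funext ω; ring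
    have i1 : Integrable (fun ω => R ω ^ 2 - 2 * t * (R ω * g ω)) μ := by
      exact hR2.sub (hRg.const_mul _)
    have i2 : Integrable (fun ω => t ^ 2 * g ω ^ 2) μ := hg2.const_mul _
    rw [e, integral_add i1 i2, integral_sub hR2 (hRg.const_mul _), integral_const_mul,
      integral_const_mul]
  have hq : ∀ t : ℝ, 0 ≤ (∫ ω, g ω ^ 2 ∂μ) * t ^ 2 + (-2 * ∫ ω, R ω * g ω ∂μ) * t := by
    intro t
    have ht := h t
    rw [key t] at ht
    linarith
  have := quad_min _ _ (integral_nonneg fun ω => sq_nonneg _) hq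
  linarith

/-- For a Bernoulli(π) treatment `A` independent of mean-zero covariates `X`,
the treatment coefficient `β` of the (unconstrained) population least squares fit of `Y` on
`(1, A, X, A·X)` equals the average treatment effect
`E(Y | A = 1) - E(Y | A = 0) = E(YA)/π - E(Y(1-A))/(1-π)`. -/
theorem stmt_0 {Ω : Type*} [MeasurableSpace Ω] (μ : Measure Ω) [IsProbabilityMeasure μ]
    {p : ℕ} (π : ℝ) (hπ0 : 0 < π) (hπ1 : π < 1)
    (A Y : Ω → ℝ) (X : Ω → Fin p → ℝ)
    (hA01 : ∀ ω, A ω = 0 ∨ A ω = 1)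
    (hAmean : ∫ ω, A ω ∂μ = π)
    (hindep : IndepFun A X μ)
    (hXmean : ∀ j, ∫ ω, X ω j ∂μ = 0)
    (hY : MemLp Y 2 μ) (hX : ∀ j, MemLp (fun ω => X ω j) 2 μ)
    (α β : ℝ) (γ δ : Fin p → ℝ)
    (hmin : ∀ (α' β' : ℝ) (γ' δ' : Fin p → ℝ),
      ∫ ω, (Y ω - α - β * A ω - (∑ j, γ j * X ω j) - A ω * ∑ j, δ j * X ω j) ^ 2 ∂μ ≤
      ∫ ω, (Y ω - α' - β' * A ω - (∑ j, γ' j * X ω j) - A ω * ∑ j, δ' j * X ω j) ^ 2 ∂μ) :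
    β = (∫ ω, Y ω * A ω ∂μ) / π - (∫ ω, Y ω * (1 - A ω) ∂μ) / (1 - π) := by
  set S : Ω → ℝ := fun ω => ∑ j, γ j * X ω j with hSdef
  set T : Ω → ℝ := fun ω => ∑ j, δ j * X ω j with hTdef
  -- basic integrability / measurability
  have hAint : Integrable A μ := by
    by_contra h
    rw [integral_undef h] at hAmean
    exact hπ0.ne' hAmean.symm
  have hAmeas : AEStronglyMeasurable A μ := hAint.aestronglyMeasurable
  have hA2 : MemLp A 2 μ := by
    refine (memLp_top_of_bound hAmeas 1 (Filter.Eventually.of_forall fun ω => ?_)).mono_exponent le_top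
    rcases hA01 ω with h | h <;> simp [h]
  have hS2 : MemLp S 2 μ :=
    memLp_finset_sum _ fun j _ => (hX j).const_mul (γ j)
  have hT2 : MemLp T 2 μ :=
    memLp_finset_sum _ fun j _ => (hX j).const_mul (δ j)
  have hAT2 : MemLp (fun ω => A ω * T ω) 2 μ := by
    refine MemLp.of_le hT2 (hAmeas.mul hT2.aestronglyMeasurable) (Filter.Eventually.of_forall fun ω => ?_)
    rcases hA01 ω with h | h <;> simp [h, abs_nonneg]
  have hR2 : MemLp (fun ω => Y ω - α - β * A ω - S ω - A ω * T ω) 2 μ := by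
    exact ((((hY.sub (memLp_const α)).sub (hA2.const_mul β)).sub hS2).sub hAT2)
  have hYint : Integrable Y μ := hY.integrable one_le_two
  have hSint : Integrable S μ := hS2.integrable one_le_two
  have hTint : Integrable T μ := hT2.integrable one_le_two
  have hATint : Integrable (fun ω => A ω * T ω) μ := l2_mul_int hA2 hT2
  have hASint : Integrable (fun ω => A ω * S ω) μ := l2_mul_int hA2 hS2
  have hYA : Integrable (fun ω => Y ω * A ω) μ := l2_mul_int hY hA2
  -- independence consequences
  have hφmeas : ∀ c : Fin p → ℝ, Measurable (fun x : Fin p → ℝ => ∑ j, c j * x j) := by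
    intro c
    exact Finset.measurable_sum _ fun j _ => by fun_prop
  have hindT : IndepFun A T μ := hindep.comp measurable_id (hφmeas δ)
  have hindS : IndepFun A S μ := hindep.comp measurable_id (hφmeas γ)
  have hSmean : ∫ ω, S ω ∂μ = 0 := by
    rw [hSdef]
    rw [integral_finset_sum _ fun j _ => ((hX j).integrable one_le_two).const_mul (γ j)]
    simp [integral_const_mul, hXmean]
  have hTmean : ∫ ω, T ω ∂μ = 0 := by
    rw [hTdef]
    rw [integral_finset_sum _ fun j _ => ((hX j).integrable one_le_two).const_mul (δ j)]
    simp [integral_const_mul, hXmean]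
  have hATzero : ∫ ω, A ω * T ω ∂μ = 0 := by
    have h : ∫ ω, A ω * T ω ∂μ = (∫ ω, A ω ∂μ) * ∫ ω, T ω ∂μ :=
      hindT.integral_mul_eq_mul_integral hAint.aestronglyMeasurable hTint.aestronglyMeasurable
    rw [h, hTmean, mul_zero]
  have hASzero : ∫ ω, A ω * S ω ∂μ = 0 := by
    have h : ∫ ω, A ω * S ω ∂μ = (∫ ω, A ω ∂μ) * ∫ ω, S ω ∂μ :=
      hindS.integral_mul_eq_mul_integral hAint.aestronglyMeasurable hSint.aestronglyMeasurable
    rw [h, hSmean, mul_zero]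
  -- normal equations
  have hne1 : ∫ ω, (Y ω - α - β * A ω - S ω - A ω * T ω) * (fun _ : Ω => (1:ℝ)) ω ∂μ = 0 := by
    apply normal_eq μ _ _ hR2 (memLp_const 1)
    intro t
    have h := hmin (α + t) β γ δ
    have e : (fun ω => ((Y ω - α - β * A ω - S ω - A ω * T ω) - t * (fun _ : Ω => (1:ℝ)) ω) ^ 2)
        = fun ω => (Y ω - (α + t) - β * A ω - S ω - A ω * T ω) ^ 2 := by
      funext ω; ring
    rw [e]
    exact h
  have hne2 : ∫ ω, (Y ω - α - β * A ω - S ω - A ω * T ω) * A ω ∂μ = 0 := by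
    apply normal_eq μ _ _ hR2 hA2
    intro t
    have h := hmin α (β + t) γ δ
    have e : (fun ω => ((Y ω - α - β * A ω - S ω - A ω * T ω) - t * A ω) ^ 2)
        = fun ω => (Y ω - α - (β + t) * A ω - S ω - A ω * T ω) ^ 2 := by
      funext ω; ring
    rw [e]
    exact h
  -- expand the first normal equation
  have i1 : Integrable (fun ω => Y ω - α) μ := hYint.sub (integrable_const α)
  have i2 : Integrable (fun ω => Y ω - α - β * A ω) μ := i1.sub (hAint.const_mul β)
  have i3 : Integrable (fun ω => Y ω - α - β * A ω - S ω) μ := i2.sub hSint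
  have E1 : ∫ ω, Y ω ∂μ = α + β * π := by
    have e : (fun ω => (Y ω - α - β * A ω - S ω - A ω * T ω) * (fun _ : Ω => (1:ℝ)) ω)
        = fun ω => Y ω - α - β * A ω - S ω - A ω * T ω := by
      funext ω; ring
    rw [e] at hne1
    rw [integral_sub i3 hATint, integral_sub i2 hSint, integral_sub i1 (hAint.const_mul β),
      integral_sub hYint (integrable_const α), integral_const, integral_const_mul, hAmean,
      hSmean, hATzero] at hne1
    simp at hne1
    linarith
  -- expand the second normal equation
  have hAA : ∀ ω, A ω * A ω = A ω := by
    intro ω; rcases hA01 ω with h | h <;> simp [h]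
  have j1 : Integrable (fun ω => Y ω * A ω - α * A ω) μ := hYA.sub (hAint.const_mul α)
  have j2 : Integrable (fun ω => Y ω * A ω - α * A ω - β * A ω) μ := j1.sub (hAint.const_mul β)
  have j3 : Integrable (fun ω => Y ω * A ω - α * A ω - β * A ω - A ω * S ω) μ := j2.sub hASint
  have E2 : ∫ ω, Y ω * A ω ∂μ = α * π + β * π := by
    have e : (fun ω => (Y ω - α - β * A ω - S ω - A ω * T ω) * A ω)
        = fun ω => Y ω * A ω - α * A ω - β * A ω - A ω * S ω - A ω * T ω := by
      funext ω
      have h := hAA ω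
      linear_combination (-β - T ω) * h
    rw [e] at hne2
    rw [integral_sub j3 hATint, integral_sub j2 hASint, integral_sub j1 (hAint.const_mul β),
      integral_sub hYA (hAint.const_mul α), integral_const_mul, integral_const_mul, hAmean,
      hASzero, hATzero] at hne2
    linarith
  -- conclude
  have E3 : ∫ ω, Y ω * (1 - A ω) ∂μ = (∫ ω, Y ω ∂μ) - ∫ ω, Y ω * A ω ∂μ := by
    have e : (fun ω => Y ω * (1 - A ω)) = fun ω => Y ω - Y ω * A ω := by
      funext ω; ring
    rw [e, integral_sub hYint hYA]
  rw [E3, E1, E2]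
  have h1 : π ≠ 0 := hπ0.ne'
  have h2 : (1 : ℝ) - π ≠ 0 := by linarith
  field_simp
  ring
end

section
/- Let A be Bernoulli(π) independent of X, and let ε₁ be a random variable with E(ε₁)=0, E(ε₁A)=0, E(ε₁ X_j)=0 for all j in a set U_Γ, and E(ε₁ A X_j)=0 for all j in a set U_Δ. For vectors d_γ supported on U_Γ and d_δ supported on U_Δ, E[(A−π)² ε₁ (d_γᵀX + A d_δᵀX)] = (1−2π) d_γᵀ E(ε₁ A X restricted to U_Γ), and this equals 0 if π = 1/2 or U_Δ ⊇ U_Γ. -/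
open MeasureTheory ProbabilityTheory

/-- If `ε₁` satisfies `E ε₁ = 0`, `E(ε₁A) = 0`, `E(ε₁X_j) = 0` for `j ∈ U_Γ`
and `E(ε₁AX_j) = 0` for `j ∈ U_Δ`, and `d_γ` is supported on `U_Γ`, `d_δ` on `U_Δ`, then
`E[(A-π)² ε₁ (d_γᵀX + A d_δᵀX)] = (1-2π) ∑_j d_γ j · E(ε₁ A X_j)`, which is `0` when
`π = 1/2` or `U_Δ ⊇ U_Γ`. -/
theorem stmt_5 {Ω : Type*} [MeasurableSpace Ω] (μ : Measure Ω) [IsProbabilityMeasure μ]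
    {p : ℕ} (π : ℝ) (hπ0 : 0 < π) (hπ1 : π < 1)
    (A : Ω → ℝ) (X : Ω → Fin p → ℝ) (ε₁ : Ω → ℝ)
    (hA01 : ∀ ω, A ω = 0 ∨ A ω = 1)
    (hAmean : ∫ ω, A ω ∂μ = π)
    (hindep : IndepFun A X μ)
    (UΓ UΔ : Set (Fin p)) (dγ dδ : Fin p → ℝ)
    (hsuppγ : ∀ j ∉ UΓ, dγ j = 0) (hsuppδ : ∀ j ∉ UΔ, dδ j = 0)
    (horth0 : ∫ ω, ε₁ ω ∂μ = 0)
    (horthA : ∫ ω, ε₁ ω * A ω ∂μ = 0)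
    (horthX : ∀ j ∈ UΓ, ∫ ω, ε₁ ω * X ω j ∂μ = 0)
    (horthAX : ∀ j ∈ UΔ, ∫ ω, ε₁ ω * A ω * X ω j ∂μ = 0)
    (hint1 : ∀ j, Integrable (fun ω => ε₁ ω * X ω j) μ)
    (hint2 : ∀ j, Integrable (fun ω => ε₁ ω * A ω * X ω j) μ) :
    (∫ ω, (A ω - π) ^ 2 * (ε₁ ω * ((∑ j, dγ j * X ω j) + A ω * ∑ j, dδ j * X ω j)) ∂μ
      = (1 - 2 * π) * ∑ j, dγ j * ∫ ω, ε₁ ω * A ω * X ω j ∂μ) ∧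
    ((π = 1 / 2 ∨ UΓ ⊆ UΔ) →
      ∫ ω, (A ω - π) ^ 2 * (ε₁ ω * ((∑ j, dγ j * X ω j) + A ω * ∑ j, dδ j * X ω j)) ∂μ
        = 0) := by

  classical
  -- sums as functions of j
  set g1 : Ω → ℝ := fun ω => ε₁ ω * A ω * ∑ j, dγ j * X ω j with hg1
  set g2 : Ω → ℝ := fun ω => ε₁ ω * A ω * ∑ j, dδ j * X ω j with hg2
  set g3 : Ω → ℝ := fun ω => ε₁ ω * ∑ j, dγ j * X ω j with hg3
  have hi1 : Integrable g1 μ := by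
    have : g1 = fun ω => ∑ j, dγ j * (ε₁ ω * A ω * X ω j) := by
      funext ω; simp only [hg1, Finset.mul_sum]; apply Finset.sum_congr rfl; intro j _; ring
    rw [this]; exact integrable_finset_sum _ fun j _ => (hint2 j).const_mul _
  have hi2 : Integrable g2 μ := by
    have : g2 = fun ω => ∑ j, dδ j * (ε₁ ω * A ω * X ω j) := by
      funext ω; simp only [hg2, Finset.mul_sum]; apply Finset.sum_congr rfl; intro j _; ring
    rw [this]; exact integrable_finset_sum _ fun j _ => (hint2 j).const_mul _
  have hi3 : Integrable g3 μ := by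
    have : g3 = fun ω => ∑ j, dγ j * (ε₁ ω * X ω j) := by
      funext ω; simp only [hg3, Finset.mul_sum]; apply Finset.sum_congr rfl; intro j _; ring
    rw [this]; exact integrable_finset_sum _ fun j _ => (hint1 j).const_mul _
  have hI1 : ∫ ω, g1 ω ∂μ = ∑ j, dγ j * ∫ ω, ε₁ ω * A ω * X ω j ∂μ := by
    have : g1 = fun ω => ∑ j, dγ j * (ε₁ ω * A ω * X ω j) := by
      funext ω; simp only [hg1, Finset.mul_sum]; apply Finset.sum_congr rfl; intro j _; ring
    rw [this, integral_finset_sum _ fun j _ => (hint2 j).const_mul _]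
    exact Finset.sum_congr rfl fun j _ => integral_const_mul _ _
  have hI2 : ∫ ω, g2 ω ∂μ = 0 := by
    have : g2 = fun ω => ∑ j, dδ j * (ε₁ ω * A ω * X ω j) := by
      funext ω; simp only [hg2, Finset.mul_sum]; apply Finset.sum_congr rfl; intro j _; ring
    rw [this, integral_finset_sum _ fun j _ => (hint2 j).const_mul _]
    apply Finset.sum_eq_zero; intro j _
    rw [integral_const_mul]
    by_cases hj : j ∈ UΔ
    · rw [horthAX j hj, mul_zero]
    · rw [hsuppδ j hj, zero_mul]
  have hI3 : ∫ ω, g3 ω ∂μ = 0 := by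
    have : g3 = fun ω => ∑ j, dγ j * (ε₁ ω * X ω j) := by
      funext ω; simp only [hg3, Finset.mul_sum]; apply Finset.sum_congr rfl; intro j _; ring
    rw [this, integral_finset_sum _ fun j _ => (hint1 j).const_mul _]
    apply Finset.sum_eq_zero; intro j _
    rw [integral_const_mul]
    by_cases hj : j ∈ UΓ
    · rw [horthX j hj, mul_zero]
    · rw [hsuppγ j hj, zero_mul]
  have key : (fun ω => (A ω - π) ^ 2 * (ε₁ ω * ((∑ j, dγ j * X ω j) + A ω * ∑ j, dδ j * X ω j)))
      = fun ω => (1 - 2 * π) * g1 ω + (1 - 2 * π) * g2 ω + π ^ 2 * g3 ω + π ^ 2 * g2 ω := by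
    funext ω
    simp only [hg1, hg2, hg3]
    rcases hA01 ω with h | h <;> rw [h] <;> ring
  have main : ∫ ω, (A ω - π) ^ 2 * (ε₁ ω * ((∑ j, dγ j * X ω j) + A ω * ∑ j, dδ j * X ω j)) ∂μ
      = (1 - 2 * π) * ∑ j, dγ j * ∫ ω, ε₁ ω * A ω * X ω j ∂μ := by
    rw [key]
    have ha1 : Integrable (fun ω => (1 - 2 * π) * g1 ω) μ := hi1.const_mul _
    have ha2 : Integrable (fun ω => (1 - 2 * π) * g2 ω) μ := hi2.const_mul _
    have ha3 : Integrable (fun ω => π ^ 2 * g3 ω) μ := hi3.const_mul _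
    have ha4 : Integrable (fun ω => π ^ 2 * g2 ω) μ := hi2.const_mul _
    have hb1 : Integrable (fun ω => (1 - 2 * π) * g1 ω + (1 - 2 * π) * g2 ω) μ := ha1.add ha2
    have hb2 : Integrable (fun ω => ((1 - 2 * π) * g1 ω + (1 - 2 * π) * g2 ω) + π ^ 2 * g3 ω) μ :=
      hb1.add ha3
    rw [integral_add hb2 ha4, integral_add hb1 ha3, integral_add ha1 ha2,
      integral_const_mul, integral_const_mul, integral_const_mul, integral_const_mul,
      hI1, hI2, hI3]
    ring
  refine ⟨main, ?_⟩
  rintro (hhalf | hsub)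
  · rw [main, hhalf]; ring
  · rw [main]
    have : ∑ j, dγ j * ∫ ω, ε₁ ω * A ω * X ω j ∂μ = 0 := by
      apply Finset.sum_eq_zero; intro j _
      by_cases hj : j ∈ UΓ
      · rw [horthAX j (hsub hj), mul_zero]
      · rw [hsuppγ j hj, zero_mul]
    rw [this, mul_zero]
end

section
/- Let A be Bernoulli(π) independent of X, E(X)=0, Σ = E(XXᵀ) positive definite. Let (γ_f, δ_f) be the full-model coefficients, and consider the ANCOVA model (γ₁ = γ_f + πδ_f, δ₁ = 0) versus the ANOVA model (γ₂ = 0, δ₂ = 0). Then the scaled variance difference satisfies π²(1−π)²(V₁ − V₂) = π(1−π)(γ_f + πδ_f)ᵀ Σ {(3π−2)δ_f − γ_f}. In particular, if γ_f = (π−1)δ_f with δ_f ≠ 0 and π ≠ 1/2, then V₁ − V₂ = (2π−1)² δ_fᵀΣδ_f /(π(1−π)) · (1/(π(1−π))) > 0, i.e., ANCOVA can have strictly larger asymptotic variance than ANOVA. -/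
open MeasureTheory ProbabilityTheory Matrix

/-- ANCOVA vs ANOVA counterexample: with full-model residual `ε_f`
(orthogonal to `1, A, X, AX`), ANCOVA coefficient `γ₁ = γ_f + π δ_f`, ANOVA residual
`ε₂ = ε_f + γ_fᵀX + A δ_fᵀX` and ANCOVA residual `ε₁ = ε_f + (γ_f - γ₁)ᵀX + A δ_fᵀX`,
one has `π²(1-π)²(V₁ - V₂) = π(1-π)(γ_f + πδ_f)ᵀΣ{(3π-2)δ_f - γ_f}`; in particular, if
`γ_f = (π-1)δ_f`, `δ_f ≠ 0` and `π ≠ 1/2`, then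
`V₁ - V₂ = (2π-1)² δ_fᵀΣδ_f/(π(1-π)) > 0`, i.e. ANCOVA has strictly larger asymptotic
variance than ANOVA. -/
theorem stmt_12 {Ω : Type*} [MeasurableSpace Ω] (μ : Measure Ω) [IsProbabilityMeasure μ]
    {p : ℕ} (π : ℝ) (hπ0 : 0 < π) (hπ1 : π < 1)
    (A : Ω → ℝ) (X : Ω → Fin p → ℝ)
    (hA01 : ∀ ω, A ω = 0 ∨ A ω = 1)
    (hAmean : ∫ ω, A ω ∂μ = π)
    (hindep : IndepFun A X μ)
    (hXmean : ∀ j, ∫ ω, X ω j ∂μ = 0)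
    (hXL2 : ∀ j, MemLp (fun ω => X ω j) 2 μ)
    (S : Matrix (Fin p) (Fin p) ℝ)
    (hS : ∀ j k, S j k = ∫ ω, X ω j * X ω k ∂μ) (hSpd : S.PosDef)
    (γf δf γ₁ : Fin p → ℝ) (hγ₁ : γ₁ = γf + π • δf)
    (εf ε₁ ε₂ : Ω → ℝ) (hεfL2 : MemLp εf 2 μ)
    (hf0 : ∫ ω, εf ω ∂μ = 0) (hfA : ∫ ω, εf ω * A ω ∂μ = 0)
    (hfX : ∀ j, ∫ ω, εf ω * X ω j ∂μ = 0)
    (hfAX : ∀ j, ∫ ω, εf ω * A ω * X ω j ∂μ = 0)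
    (hε₂ : ∀ ω, ε₂ ω = εf ω + (∑ j, γf j * X ω j) + A ω * ∑ j, δf j * X ω j)
    (hε₁ : ∀ ω, ε₁ ω = εf ω + (∑ j, (γf j - γ₁ j) * X ω j) + A ω * ∑ j, δf j * X ω j) :
    (∫ ω, (A ω - π) ^ 2 * ε₁ ω ^ 2 ∂μ) - (∫ ω, (A ω - π) ^ 2 * ε₂ ω ^ 2 ∂μ)
      = π * (1 - π) * ((γf + π • δf) ⬝ᵥ (S *ᵥ ((3 * π - 2) • δf - γf))) ∧
    (γf = (π - 1) • δf → δf ≠ 0 → π ≠ 1 / 2 →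
      ((∫ ω, (A ω - π) ^ 2 * ε₁ ω ^ 2 ∂μ) / (π ^ 2 * (1 - π) ^ 2)
          - (∫ ω, (A ω - π) ^ 2 * ε₂ ω ^ 2 ∂μ) / (π ^ 2 * (1 - π) ^ 2)
        = (2 * π - 1) ^ 2 * (δf ⬝ᵥ (S *ᵥ δf)) / (π * (1 - π)) ∧
      (∫ ω, (A ω - π) ^ 2 * ε₂ ω ^ 2 ∂μ) / (π ^ 2 * (1 - π) ^ 2)
        < (∫ ω, (A ω - π) ^ 2 * ε₁ ω ^ 2 ∂μ) / (π ^ 2 * (1 - π) ^ 2))) := by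
  have h1π : (0:ℝ) < 1 - π := by linarith
  have hAint : Integrable A μ := by
    by_contra h
    rw [integral_undef h] at hAmean
    exact absurd hAmean (ne_of_lt hπ0)
  have hAm : AEStronglyMeasurable A μ := hAint.1
  have hAnorm : ∀ ω, ‖A ω‖ ≤ 1 := by
    intro ω; rcases hA01 ω with h | h <;> simp [h]
  have hmul : ∀ {f g : Ω → ℝ}, MemLp f 2 μ → MemLp g 2 μ →
      Integrable (fun ω => f ω * g ω) μ := by
    intro f g hf hg
    refine (hf.integrable_sq.add hg.integrable_sq).mono'
      (hf.aestronglyMeasurable.mul hg.aestronglyMeasurable) ?_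
    filter_upwards with ω
    rw [Real.norm_eq_abs, abs_mul]; simp only [Pi.add_apply]
    nlinarith [abs_nonneg (f ω), abs_nonneg (g ω), sq_abs (f ω), sq_abs (g ω),
      sq_nonneg (|f ω| - |g ω|)]
  have hL : ∀ c : Fin p → ℝ, MemLp (fun ω => ∑ j, c j * X ω j) 2 μ := fun c =>
    memLp_finset_sum Finset.univ (fun j _ => (hXL2 j).const_mul (c j))
  have hLL : ∀ c c' : Fin p → ℝ,
      ∫ ω, (∑ j, c j * X ω j) * (∑ j, c' j * X ω j) ∂μ = c ⬝ᵥ S *ᵥ c' := by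
    intro c c'
    have h1 : ∀ ω, (∑ j, c j * X ω j) * (∑ j, c' j * X ω j)
        = ∑ j, ∑ k, (c j * c' k) * (X ω j * X ω k) := by
      intro ω
      rw [Finset.sum_mul_sum]
      exact Finset.sum_congr rfl fun j _ => Finset.sum_congr rfl fun k _ => by ring
    simp_rw [h1]
    rw [integral_finset_sum _ (fun j _ => integrable_finset_sum _
      (fun k _ => ((hmul (hXL2 j) (hXL2 k)).const_mul _)))]
    have : ∀ j : Fin p, (∫ ω, ∑ k, (c j * c' k) * (X ω j * X ω k) ∂μ)
        = ∑ k, (c j * c' k) * S j k := by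
      intro j
      rw [integral_finset_sum _ (fun k _ => ((hmul (hXL2 j) (hXL2 k)).const_mul _))]
      exact Finset.sum_congr rfl fun k _ => by rw [integral_const_mul, ← hS]
    simp_rw [this]
    simp only [dotProduct, mulVec, Finset.mul_sum]
    refine Finset.sum_congr rfl fun j _ => Finset.sum_congr rfl fun k _ => by ring
  have hALL : ∀ c c' : Fin p → ℝ,
      ∫ ω, A ω * ((∑ j, c j * X ω j) * (∑ j, c' j * X ω j)) ∂μ = π * (c ⬝ᵥ S *ᵥ c') := by
    intro c c'
    have hφ : Measurable (fun v : Fin p → ℝ => (∑ j, c j * v j) * (∑ j, c' j * v j)) := by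
      fun_prop
    have hi : IndepFun A (fun ω => (∑ j, c j * X ω j) * (∑ j, c' j * X ω j)) μ :=
      hindep.comp measurable_id hφ
    rw [hi.integral_fun_mul_eq_mul_integral hAm (hmul (hL c) (hL c')).1, hAmean, hLL c c']
  have hεL : ∀ c : Fin p → ℝ, ∫ ω, εf ω * (∑ j, c j * X ω j) ∂μ = 0 := by
    intro c
    have h1 : ∀ ω, εf ω * (∑ j, c j * X ω j) = ∑ j, c j * (εf ω * X ω j) := by
      intro ω; simp only [Finset.mul_sum]
      exact Finset.sum_congr rfl fun j _ => by ring
    simp_rw [h1]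
    rw [integral_finset_sum _ (fun j _ => (hmul hεfL2 (hXL2 j)).const_mul _)]
    refine Finset.sum_eq_zero fun j _ => ?_
    rw [integral_const_mul, hfX j, mul_zero]
  have hAεL : ∀ c : Fin p → ℝ, ∫ ω, A ω * (εf ω * (∑ j, c j * X ω j)) ∂μ = 0 := by
    intro c
    have h1 : ∀ ω, A ω * (εf ω * (∑ j, c j * X ω j)) = ∑ j, c j * (εf ω * A ω * X ω j) := by
      intro ω; simp only [Finset.mul_sum]
      exact Finset.sum_congr rfl fun j _ => by ring
    have hintj : ∀ j : Fin p, Integrable (fun ω => εf ω * A ω * X ω j) μ := by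
      intro j
      have he : (fun ω => εf ω * A ω * X ω j) = (fun ω => A ω * (εf ω * X ω j)) :=
        funext fun ω => by ring
      rw [he]
      exact (hmul hεfL2 (hXL2 j)).bdd_mul (c := 1) hAm (ae_of_all _ hAnorm)
    simp_rw [h1]
    rw [integral_finset_sum _ (fun j _ => (hintj j).const_mul _)]
    refine Finset.sum_eq_zero fun j _ => ?_
    rw [integral_const_mul, hfAX j, mul_zero]
  have key : ∀ c : Fin p → ℝ,
      ∫ ω, (A ω - π) ^ 2 * (εf ω + (∑ j, c j * X ω j) + A ω * ∑ j, δf j * X ω j) ^ 2 ∂μ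
      = (∫ ω, (A ω - π) ^ 2 * εf ω ^ 2 ∂μ)
        + (π * (1 - π) * (c ⬝ᵥ S *ᵥ c) + 2 * π * (1 - π) ^ 2 * (c ⬝ᵥ S *ᵥ δf)
          + π * (1 - π) ^ 2 * (δf ⬝ᵥ S *ᵥ δf)) := by
    intro c
    set L : Ω → ℝ := fun ω => ∑ j, c j * X ω j with hLdef
    set M : Ω → ℝ := fun ω => ∑ j, δf j * X ω j with hMdef
    have hpt : ∀ ω, (A ω - π) ^ 2 * (εf ω + L ω + A ω * M ω) ^ 2
        = (A ω - π) ^ 2 * εf ω ^ 2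
          + (2 * (1 - 2*π) * (A ω * (εf ω * L ω))
          + ((1 - 2*π) * (A ω * (L ω * L ω))
          + (2 * π^2 * (εf ω * L ω)
          + (π^2 * (L ω * L ω)
          + ((1-π)^2 * 2 * (A ω * (εf ω * M ω))
          + ((1-π)^2 * 2 * (A ω * (L ω * M ω))
          + (1-π)^2 * (A ω * (M ω * M ω)))))))) := by
      intro ω; rcases hA01 ω with h | h <;> rw [h] <;> ring
    have intεL : Integrable (fun ω => εf ω * L ω) μ := hmul hεfL2 (hL c)
    have intεM : Integrable (fun ω => εf ω * M ω) μ := hmul hεfL2 (hL δf)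
    have intLL : Integrable (fun ω => L ω * L ω) μ := hmul (hL c) (hL c)
    have intLM : Integrable (fun ω => L ω * M ω) μ := hmul (hL c) (hL δf)
    have intMM : Integrable (fun ω => M ω * M ω) μ := hmul (hL δf) (hL δf)
    have intAεL : Integrable (fun ω => A ω * (εf ω * L ω)) μ :=
      intεL.bdd_mul (c := 1) hAm (ae_of_all _ hAnorm)
    have intAεM : Integrable (fun ω => A ω * (εf ω * M ω)) μ :=
      intεM.bdd_mul (c := 1) hAm (ae_of_all _ hAnorm)
    have intALL : Integrable (fun ω => A ω * (L ω * L ω)) μ :=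
      intLL.bdd_mul (c := 1) hAm (ae_of_all _ hAnorm)
    have intALM : Integrable (fun ω => A ω * (L ω * M ω)) μ :=
      intLM.bdd_mul (c := 1) hAm (ae_of_all _ hAnorm)
    have intAMM : Integrable (fun ω => A ω * (M ω * M ω)) μ :=
      intMM.bdd_mul (c := 1) hAm (ae_of_all _ hAnorm)
    have intAε2 : Integrable (fun ω => (A ω - π) ^ 2 * εf ω ^ 2) μ := by
      refine hεfL2.integrable_sq.bdd_mul (c := 1) ?_ (ae_of_all _ fun ω => ?_)
      · exact (hAm.sub aestronglyMeasurable_const).pow 2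
      · rcases hA01 ω with h | h <;> rw [h] <;>
          rw [Real.norm_eq_abs, abs_of_nonneg (sq_nonneg _)] <;> nlinarith
    have i7 : Integrable (fun ω => (1-π)^2 * (A ω * (M ω * M ω))) μ := intAMM.const_mul _
    have i6 : Integrable (fun ω => (1-π)^2 * 2 * (A ω * (L ω * M ω))
        + (1-π)^2 * (A ω * (M ω * M ω))) μ := (intALM.const_mul _).add i7
    have i5 : Integrable (fun ω => (1-π)^2 * 2 * (A ω * (εf ω * M ω))
        + ((1-π)^2 * 2 * (A ω * (L ω * M ω))
        + (1-π)^2 * (A ω * (M ω * M ω)))) μ := (intAεM.const_mul _).add i6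
    have i4 : Integrable (fun ω => π^2 * (L ω * L ω)
        + ((1-π)^2 * 2 * (A ω * (εf ω * M ω))
        + ((1-π)^2 * 2 * (A ω * (L ω * M ω))
        + (1-π)^2 * (A ω * (M ω * M ω))))) μ := (intLL.const_mul _).add i5
    have i3 : Integrable (fun ω => 2 * π^2 * (εf ω * L ω)
        + (π^2 * (L ω * L ω)
        + ((1-π)^2 * 2 * (A ω * (εf ω * M ω))
        + ((1-π)^2 * 2 * (A ω * (L ω * M ω))
        + (1-π)^2 * (A ω * (M ω * M ω)))))) μ := (intεL.const_mul _).add i4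
    have i2 : Integrable (fun ω => (1 - 2*π) * (A ω * (L ω * L ω))
        + (2 * π^2 * (εf ω * L ω)
        + (π^2 * (L ω * L ω)
        + ((1-π)^2 * 2 * (A ω * (εf ω * M ω))
        + ((1-π)^2 * 2 * (A ω * (L ω * M ω))
        + (1-π)^2 * (A ω * (M ω * M ω))))))) μ := (intALL.const_mul _).add i3
    have i1 : Integrable (fun ω => 2 * (1 - 2*π) * (A ω * (εf ω * L ω))
        + ((1 - 2*π) * (A ω * (L ω * L ω))
        + (2 * π^2 * (εf ω * L ω)
        + (π^2 * (L ω * L ω)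
        + ((1-π)^2 * 2 * (A ω * (εf ω * M ω))
        + ((1-π)^2 * 2 * (A ω * (L ω * M ω))
        + (1-π)^2 * (A ω * (M ω * M ω)))))))) μ := (intAεL.const_mul _).add i2
    have E0 : ∫ ω, ((A ω - π) ^ 2 * εf ω ^ 2
          + (2 * (1 - 2*π) * (A ω * (εf ω * L ω))
          + ((1 - 2*π) * (A ω * (L ω * L ω))
          + (2 * π^2 * (εf ω * L ω)
          + (π^2 * (L ω * L ω)
          + ((1-π)^2 * 2 * (A ω * (εf ω * M ω))
          + ((1-π)^2 * 2 * (A ω * (L ω * M ω))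
          + (1-π)^2 * (A ω * (M ω * M ω))))))))) ∂μ
        = (∫ ω, (A ω - π) ^ 2 * εf ω ^ 2 ∂μ)
          + ((∫ ω, 2 * (1 - 2*π) * (A ω * (εf ω * L ω)) ∂μ)
          + ((∫ ω, (1 - 2*π) * (A ω * (L ω * L ω)) ∂μ)
          + ((∫ ω, 2 * π^2 * (εf ω * L ω) ∂μ)
          + ((∫ ω, π^2 * (L ω * L ω) ∂μ)
          + ((∫ ω, (1-π)^2 * 2 * (A ω * (εf ω * M ω)) ∂μ)
          + ((∫ ω, (1-π)^2 * 2 * (A ω * (L ω * M ω)) ∂μ)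
          + (∫ ω, (1-π)^2 * (A ω * (M ω * M ω)) ∂μ))))))) := by
      rw [integral_add intAε2 i1, integral_add (intAεL.const_mul _) i2,
        integral_add (intALL.const_mul _) i3, integral_add (intεL.const_mul _) i4,
        integral_add (intLL.const_mul _) i5, integral_add (intAεM.const_mul _) i6,
        integral_add (intALM.const_mul _) i7]
    have vAεL : (∫ ω, A ω * (εf ω * L ω) ∂μ) = 0 := hAεL c
    have vAεM : (∫ ω, A ω * (εf ω * M ω) ∂μ) = 0 := hAεL δf
    have vεL : (∫ ω, εf ω * L ω ∂μ) = 0 := hεL c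
    have vALL : (∫ ω, A ω * (L ω * L ω) ∂μ) = π * (c ⬝ᵥ S *ᵥ c) := hALL c c
    have vALM : (∫ ω, A ω * (L ω * M ω) ∂μ) = π * (c ⬝ᵥ S *ᵥ δf) := hALL c δf
    have vAMM : (∫ ω, A ω * (M ω * M ω) ∂μ) = π * (δf ⬝ᵥ S *ᵥ δf) := hALL δf δf
    have vLL : (∫ ω, L ω * L ω ∂μ) = c ⬝ᵥ S *ᵥ c := hLL c c
    rw [integral_congr_ae (Filter.Eventually.of_forall hpt), E0]
    rw [integral_const_mul, integral_const_mul, integral_const_mul, integral_const_mul,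
      integral_const_mul, integral_const_mul, integral_const_mul]
    rw [vAεL, vAεM, vεL, vALL, vALM, vAMM, vLL]
    ring
  have hsym : ∀ u v : Fin p → ℝ, u ⬝ᵥ S *ᵥ v = v ⬝ᵥ S *ᵥ u := by
    intro u v
    simp only [dotProduct, mulVec, Finset.mul_sum]
    rw [Finset.sum_comm]
    refine Finset.sum_congr rfl fun j _ => Finset.sum_congr rfl fun k _ => ?_
    have hjk : S k j = S j k := by
      rw [hS, hS]
      exact congrArg (fun f : Ω → ℝ => ∫ ω, f ω ∂μ) (funext fun ω => mul_comm _ _)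
    rw [hjk]; ring
  have hI1 : (∫ ω, (A ω - π) ^ 2 * ε₁ ω ^ 2 ∂μ)
      = (∫ ω, (A ω - π) ^ 2 * εf ω ^ 2 ∂μ)
        + (π * (1 - π) * (((-π) • δf) ⬝ᵥ S *ᵥ ((-π) • δf))
          + 2 * π * (1 - π) ^ 2 * (((-π) • δf) ⬝ᵥ S *ᵥ δf)
          + π * (1 - π) ^ 2 * (δf ⬝ᵥ S *ᵥ δf)) := by
    have hc₁ : (fun j => γf j - γ₁ j) = (-π) • δf := by
      funext j
      simp only [hγ₁, Pi.add_apply, Pi.smul_apply, smul_eq_mul, Pi.neg_apply]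
      ring
    have h := key (fun j => γf j - γ₁ j)
    rw [hc₁] at h
    exact (integral_congr_ae (Filter.Eventually.of_forall fun ω => by
      simp only [hε₁])).trans h
  have hI2 : (∫ ω, (A ω - π) ^ 2 * ε₂ ω ^ 2 ∂μ)
      = (∫ ω, (A ω - π) ^ 2 * εf ω ^ 2 ∂μ)
        + (π * (1 - π) * (γf ⬝ᵥ S *ᵥ γf) + 2 * π * (1 - π) ^ 2 * (γf ⬝ᵥ S *ᵥ δf)
          + π * (1 - π) ^ 2 * (δf ⬝ᵥ S *ᵥ δf)) := by
    exact (integral_congr_ae (Filter.Eventually.of_forall fun ω => by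
      simp only [hε₂])).trans (key γf)
  have e11 : (((-π) • δf) ⬝ᵥ S *ᵥ ((-π) • δf)) = π^2 * (δf ⬝ᵥ S *ᵥ δf) := by
    simp only [smul_dotProduct, Matrix.mulVec_smul, dotProduct_smul, smul_eq_mul]
    ring
  have e12 : (((-π) • δf) ⬝ᵥ S *ᵥ δf) = -π * (δf ⬝ᵥ S *ᵥ δf) := by
    simp only [smul_dotProduct, smul_eq_mul]
  have e2 : (γf + π • δf) ⬝ᵥ S *ᵥ ((3 * π - 2) • δf - γf)
      = (2*π-2) * (γf ⬝ᵥ S *ᵥ δf) - γf ⬝ᵥ S *ᵥ γf + (3*π^2-2*π) * (δf ⬝ᵥ S *ᵥ δf) := by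
    simp only [Matrix.mulVec_sub, Matrix.mulVec_smul, add_dotProduct, dotProduct_sub,
      dotProduct_smul, smul_dotProduct, smul_eq_mul]
    rw [hsym δf γf]
    ring
  have part1 : (∫ ω, (A ω - π) ^ 2 * ε₁ ω ^ 2 ∂μ) - (∫ ω, (A ω - π) ^ 2 * ε₂ ω ^ 2 ∂μ)
      = π * (1 - π) * ((γf + π • δf) ⬝ᵥ (S *ᵥ ((3 * π - 2) • δf - γf))) := by
    rw [hI1, hI2, e11, e12, e2]
    ring
  refine ⟨part1, fun hγ hδ hπhalf => ?_⟩
  have hdd : 0 < δf ⬝ᵥ S *ᵥ δf := by simpa using hSpd.dotProduct_mulVec_pos hδ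
  have h2π : 2 * π - 1 ≠ 0 := fun h => hπhalf (by linarith)
  have hvec1 : γf + π • δf = (2 * π - 1) • δf := by
    rw [hγ, ← add_smul]; congr 1; ring
  have hvec2 : (3 * π - 2) • δf - γf = (2 * π - 1) • δf := by
    rw [hγ, ← sub_smul]; congr 1; ring
  have hbil : (((2 * π - 1) • δf) ⬝ᵥ S *ᵥ ((2 * π - 1) • δf))
      = (2 * π - 1) ^ 2 * (δf ⬝ᵥ S *ᵥ δf) := by
    simp only [smul_dotProduct, Matrix.mulVec_smul, dotProduct_smul, smul_eq_mul]
    ring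
  have e1 : (∫ ω, (A ω - π) ^ 2 * ε₁ ω ^ 2 ∂μ) - (∫ ω, (A ω - π) ^ 2 * ε₂ ω ^ 2 ∂μ)
      = π * (1 - π) * ((2 * π - 1) ^ 2 * (δf ⬝ᵥ S *ᵥ δf)) := by
    rw [part1, hvec1, hvec2, hbil]
  constructor
  · rw [div_sub_div_same, e1]
    field_simp
  · have hpos : 0 < (∫ ω, (A ω - π) ^ 2 * ε₁ ω ^ 2 ∂μ)
        - (∫ ω, (A ω - π) ^ 2 * ε₂ ω ^ 2 ∂μ) := by
      rw [e1]
      exact mul_pos (mul_pos hπ0 h1π) (mul_pos (pow_two_pos_of_ne_zero h2π) hdd)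
    have hc : (0:ℝ) < π ^ 2 * (1 - π) ^ 2 := by positivity
    have hlt := sub_pos.mp hpos
    gcongr
end

section
/- Let A be Bernoulli(π) independent of X, E(X)=0, Σ = E(XXᵀ) positive definite. Consider the interaction-only model with γ₁ = 0, δ₁ = Σ⁻¹E(XY | A=1), versus the ANOVA model with γ₂ = δ₂ = 0. Then π²(1−π)²(V₂ − V₁) = E[(A−π)²(Aδ₁ᵀX)²] ≥ 0, i.e., the model with only treatment-covariate interactions (and known E(X)=0) uniformly dominates ANOVA. -/
open MeasureTheory ProbabilityTheory Matrix

/-- interaction-only model vs ANOVA: with `δ₁ = Σ⁻¹ E(XY|A=1)` the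
interaction-only coefficient, residual `ε₁ = Y - α₁ - β₁ A - A δ₁ᵀX` satisfying the
first-order conditions in the intercept and treatment, and ANOVA residual
`ε₂ = ε₁ + A δ₁ᵀX`, one has `π²(1-π)²(V₂ - V₁) = E[(A-π)²(Aδ₁ᵀX)²] ≥ 0`, i.e. the
interaction-only model (with known `E X = 0`) uniformly dominates ANOVA. -/
theorem stmt_13 {Ω : Type*} [MeasurableSpace Ω] (μ : Measure Ω) [IsProbabilityMeasure μ]
    {p : ℕ} (π : ℝ) (hπ0 : 0 < π) (hπ1 : π < 1)
    (A Y : Ω → ℝ) (X : Ω → Fin p → ℝ)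
    (hA01 : ∀ ω, A ω = 0 ∨ A ω = 1)
    (hAmean : ∫ ω, A ω ∂μ = π)
    (hindep : IndepFun A X μ)
    (hXmean : ∀ j, ∫ ω, X ω j ∂μ = 0)
    (hY : MemLp Y 2 μ) (hXL2 : ∀ j, MemLp (fun ω => X ω j) 2 μ)
    (S : Matrix (Fin p) (Fin p) ℝ)
    (hS : ∀ j k, S j k = ∫ ω, X ω j * X ω k ∂μ) (hSpd : S.PosDef)
    (α₁ β₁ : ℝ) (δ₁ : Fin p → ℝ)
    (hδ₁ : δ₁ = S⁻¹ *ᵥ (fun j => (∫ ω, X ω j * Y ω * A ω ∂μ) / π))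
    (ε₁ ε₂ : Ω → ℝ)
    (hε₁ : ∀ ω, ε₁ ω = Y ω - α₁ - β₁ * A ω - A ω * ∑ j, δ₁ j * X ω j)
    (h10 : ∫ ω, ε₁ ω ∂μ = 0) (h1A : ∫ ω, ε₁ ω * A ω ∂μ = 0)
    (hε₂ : ∀ ω, ε₂ ω = ε₁ ω + A ω * ∑ j, δ₁ j * X ω j) :
    (∫ ω, (A ω - π) ^ 2 * ε₂ ω ^ 2 ∂μ) - (∫ ω, (A ω - π) ^ 2 * ε₁ ω ^ 2 ∂μ)
      = ∫ ω, (A ω - π) ^ 2 * (A ω * ∑ j, δ₁ j * X ω j) ^ 2 ∂μ ∧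
    ∫ ω, (A ω - π) ^ 2 * ε₁ ω ^ 2 ∂μ ≤ ∫ ω, (A ω - π) ^ 2 * ε₂ ω ^ 2 ∂μ := by
  -- A is integrable (else its integral would be 0 ≠ π)
  have hAint : Integrable A μ := by
    by_contra h
    rw [integral_undef h] at hAmean
    exact absurd hAmean.symm hπ0.ne'
  have hAsm : AEStronglyMeasurable A μ := hAint.aestronglyMeasurable
  have hAbd : ∀ ω, ‖A ω‖ ≤ 1 := by
    intro ω; rcases hA01 ω with h | h <;> simp [h]
  have hAtop : MemLp A ⊤ μ := memLp_top_of_bound hAsm 1 (ae_of_all _ hAbd)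
  have hA2 : MemLp A 2 μ := hAtop.mono_exponent le_top
  -- L2 * L2 → L1
  have L2mul : ∀ {f g : Ω → ℝ}, MemLp f 2 μ → MemLp g 2 μ →
      Integrable (fun ω => f ω * g ω) μ := by
    intro f g hf hg
    exact memLp_one_iff_integrable.mp
      (hg.smul hf (p := 2) (q := 2) (r := 1) (hpqr := ⟨by simp [one_div, ENNReal.inv_two_add_inv_two]⟩))
  set T : Ω → ℝ := fun ω => ∑ j, δ₁ j * X ω j with hTdef
  have hT2 : MemLp T 2 μ := by
    exact memLp_finset_sum _ fun j _ => (hXL2 j).const_mul (δ₁ j)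
  have mulA : ∀ {g : Ω → ℝ}, MemLp g 2 μ → MemLp (fun ω => A ω * g ω) 2 μ := by
    intro g hg
    exact (hg.smul hAtop (p := ⊤) (q := 2) (r := 2)).ae_eq (ae_of_all _ fun ω => rfl)
  have hAT2 : MemLp (fun ω => A ω * T ω) 2 μ := mulA hT2
  have hε₁2 : MemLp ε₁ 2 μ := by
    have : ε₁ = fun ω => Y ω - α₁ - β₁ * A ω - A ω * T ω := funext hε₁
    rw [this]
    exact ((hY.sub (memLp_const α₁)).sub (hA2.const_mul β₁)).sub hAT2
  have hε₂2 : MemLp ε₂ 2 μ := by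
    have : ε₂ = fun ω => ε₁ ω + A ω * T ω := funext hε₂
    rw [this]
    exact hε₁2.add hAT2
  have hWsm : AEStronglyMeasurable (fun ω => (A ω - π) ^ 2) μ :=
    (hAsm.sub aestronglyMeasurable_const).pow 2
  have hWbd : ∀ᵐ ω ∂μ, ‖(A ω - π) ^ 2‖ ≤ 1 := by
    refine ae_of_all _ fun ω => ?_
    rw [Real.norm_eq_abs, abs_of_nonneg (sq_nonneg _)]
    rcases hA01 ω with h | h <;> rw [h] <;> nlinarith
  -- integrability of the four integrands
  have I1 : Integrable (fun ω => (A ω - π) ^ 2 * ε₁ ω ^ 2) μ :=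
    hε₁2.integrable_sq.bdd_mul hWsm hWbd
  have I2 : Integrable (fun ω => (A ω - π) ^ 2 * ε₂ ω ^ 2) μ :=
    hε₂2.integrable_sq.bdd_mul hWsm hWbd
  have I4 : Integrable (fun ω => (A ω - π) ^ 2 * (A ω * T ω) ^ 2) μ :=
    hAT2.integrable_sq.bdd_mul hWsm hWbd
  have I3 : Integrable (fun ω => (A ω - π) ^ 2 * (ε₁ ω * (A ω * T ω))) μ :=
    (L2mul hε₁2 hAT2).bdd_mul hWsm hWbd
  -- the cross term vanishes
  have hcross : ∫ ω, (A ω - π) ^ 2 * (ε₁ ω * (A ω * T ω)) ∂μ = 0 := by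
    have hpt : (fun ω => (A ω - π) ^ 2 * (ε₁ ω * (A ω * T ω)))
        = fun ω => (1 - π) ^ 2 * (ε₁ ω * A ω * T ω) := by
      funext ω
      rcases hA01 ω with h | h <;> rw [h] <;> ring
    rw [hpt, integral_const_mul]
    -- show ∫ ε₁ A T = 0
    suffices hz : ∫ ω, ε₁ ω * A ω * T ω ∂μ = 0 by rw [hz, mul_zero]
    have hiYAT : Integrable (fun ω => Y ω * (A ω * T ω)) μ := L2mul hY hAT2
    have hiAT : Integrable (fun ω => A ω * T ω) μ := hAT2.integrable one_le_two
    have hiATsq : Integrable (fun ω => A ω * T ω ^ 2) μ := by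
      refine hAT2.integrable_sq.congr (ae_of_all _ fun ω => ?_)
      show (A ω * T ω) ^ 2 = A ω * T ω ^ 2
      rcases hA01 ω with h | h <;> rw [h] <;> ring
    have hpt2 : (fun ω => ε₁ ω * A ω * T ω)
        = fun ω => Y ω * (A ω * T ω) - (α₁ + β₁) * (A ω * T ω) - A ω * T ω ^ 2 := by
      funext ω
      rw [hε₁ ω]
      rcases hA01 ω with h | h <;> rw [h] <;> ring
    have hiC : Integrable (fun ω => (α₁ + β₁) * (A ω * T ω)) μ := hiAT.const_mul _
    have hiD : Integrable (fun ω => Y ω * (A ω * T ω) - (α₁ + β₁) * (A ω * T ω)) μ :=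
      hiYAT.sub hiC
    rw [hpt2, integral_sub hiD hiATsq, integral_sub hiYAT hiC, integral_const_mul]
    -- independence consequences
    have hindj : ∀ j, IndepFun A (fun ω => X ω j) μ := fun j =>
      hindep.comp measurable_id (measurable_pi_apply j)
    have hAXj : ∀ j, ∫ ω, A ω * X ω j ∂μ = 0 := by
      intro j
      rw [(hindj j).integral_fun_mul_eq_mul_integral hAsm (hXL2 j).aestronglyMeasurable, hXmean j, mul_zero]
    have hiAXj : ∀ j, Integrable (fun ω => A ω * X ω j) μ := fun j => L2mul hA2 (hXL2 j)
    -- ∫ A T = 0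
    have hAT0 : ∫ ω, A ω * T ω ∂μ = 0 := by
      have : (fun ω => A ω * T ω) = fun ω => ∑ j, δ₁ j * (A ω * X ω j) := by
        funext ω; simp only [hTdef, Finset.mul_sum]
        exact Finset.sum_congr rfl fun j _ => by ring
      rw [this, integral_finset_sum _ (fun j _ => (hiAXj j).const_mul _)]
      simp [integral_const_mul, hAXj]
    -- ∫ A T² = π * ∫ T²
    have hATsq : ∫ ω, A ω * T ω ^ 2 ∂μ = π * ∫ ω, T ω ^ 2 ∂μ := by
      have hind2 : IndepFun A (fun ω => T ω ^ 2) μ := by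
        have hφ : Measurable fun x : Fin p → ℝ => (∑ j, δ₁ j * x j) ^ 2 :=
          (Finset.measurable_sum Finset.univ
            (fun j _ => (measurable_pi_apply j : Measurable fun x : Fin p → ℝ => x j).const_mul (δ₁ j))).pow_const 2
        exact hindep.comp measurable_id hφ
      rw [hind2.integral_fun_mul_eq_mul_integral hAsm (hT2.aestronglyMeasurable.pow 2), hAmean]
    -- ∫ T² = ∑ j, δ₁ j * (S *ᵥ δ₁) j
    have hTsq : ∫ ω, T ω ^ 2 ∂μ = ∑ j, δ₁ j * (S *ᵥ δ₁) j := by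
      have : (fun ω => T ω ^ 2)
          = fun ω => ∑ j, ∑ k, δ₁ j * δ₁ k * (X ω j * X ω k) := by
        funext ω
        simp only [hTdef]; rw [sq, Finset.sum_mul_sum]
        refine Finset.sum_congr rfl fun j _ => Finset.sum_congr rfl fun k _ => by ring
      rw [this, integral_finset_sum _ (fun j _ => integrable_finset_sum _
        (fun k _ => (L2mul (hXL2 j) (hXL2 k)).const_mul _))]
      simp only [mulVec, dotProduct]
      refine Finset.sum_congr rfl fun j _ => ?_
      rw [integral_finset_sum _ (fun k _ => (L2mul (hXL2 j) (hXL2 k)).const_mul _),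
        Finset.mul_sum]
      refine Finset.sum_congr rfl fun k _ => ?_
      rw [integral_const_mul, hS j k]; ring
    -- ∫ Y A T = ∑ j, δ₁ j * ∫ X_j Y A
    have hYAT : ∫ ω, Y ω * (A ω * T ω) ∂μ = ∑ j, δ₁ j * ∫ ω, X ω j * Y ω * A ω ∂μ := by
      have : (fun ω => Y ω * (A ω * T ω))
          = fun ω => ∑ j, δ₁ j * (X ω j * Y ω * A ω) := by
        funext ω; simp only [hTdef, Finset.mul_sum]
        refine Finset.sum_congr rfl fun j _ => by ring
      have hint : ∀ j, Integrable (fun ω => X ω j * Y ω * A ω) μ := by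
        intro j
        have : (fun ω => X ω j * Y ω * A ω) = fun ω => Y ω * (A ω * X ω j) := by
          funext ω; ring
        rw [this]
        exact L2mul hY (mulA (hXL2 j))
      rw [this, integral_finset_sum _ (fun j _ => (hint j).const_mul _)]
      exact Finset.sum_congr rfl fun j _ => integral_const_mul _ _
    -- S *ᵥ δ₁ = v
    have hSv : S *ᵥ δ₁ = fun j => (∫ ω, X ω j * Y ω * A ω ∂μ) / π := by
      rw [hδ₁, mulVec_mulVec, Matrix.mul_nonsing_inv _
        (isUnit_iff_ne_zero.mpr hSpd.det_pos.ne'), one_mulVec]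
    rw [hYAT, hAT0, hATsq, hTsq, hSv, mul_zero, sub_zero]
    have : π * ∑ j, δ₁ j * ((∫ ω, X ω j * Y ω * A ω ∂μ) / π)
        = ∑ j, δ₁ j * ∫ ω, X ω j * Y ω * A ω ∂μ := by
      rw [Finset.mul_sum]
      refine Finset.sum_congr rfl fun j _ => ?_
      field_simp
    rw [this, sub_self]
  -- main expansion
  have key : ∫ ω, (A ω - π) ^ 2 * ε₂ ω ^ 2 ∂μ
      = (∫ ω, (A ω - π) ^ 2 * ε₁ ω ^ 2 ∂μ)
        + ∫ ω, (A ω - π) ^ 2 * (A ω * T ω) ^ 2 ∂μ := by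
    have hpt : (fun ω => (A ω - π) ^ 2 * ε₂ ω ^ 2)
        = fun ω => (A ω - π) ^ 2 * ε₁ ω ^ 2
          + (2 * ((A ω - π) ^ 2 * (ε₁ ω * (A ω * T ω)))
            + (A ω - π) ^ 2 * (A ω * T ω) ^ 2) := by
      funext ω; rw [hε₂ ω]; ring
    calc ∫ ω, (A ω - π) ^ 2 * ε₂ ω ^ 2 ∂μ
        = ∫ ω, ((A ω - π) ^ 2 * ε₁ ω ^ 2
          + (2 * ((A ω - π) ^ 2 * (ε₁ ω * (A ω * T ω)))
            + (A ω - π) ^ 2 * (A ω * T ω) ^ 2)) ∂μ := by rw [← hpt]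
      _ = (∫ ω, (A ω - π) ^ 2 * ε₁ ω ^ 2 ∂μ)
          + ((∫ ω, 2 * ((A ω - π) ^ 2 * (ε₁ ω * (A ω * T ω))) ∂μ)
            + ∫ ω, (A ω - π) ^ 2 * (A ω * T ω) ^ 2 ∂μ) := by
          have I3' : Integrable (fun ω => 2 * ((A ω - π) ^ 2 * (ε₁ ω * (A ω * T ω)))) μ :=
            I3.const_mul 2
          have I34 : Integrable (fun ω => 2 * ((A ω - π) ^ 2 * (ε₁ ω * (A ω * T ω)))
              + (A ω - π) ^ 2 * (A ω * T ω) ^ 2) μ := I3'.add I4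
          rw [integral_add I1 I34, integral_add I3' I4]
      _ = _ := by rw [integral_const_mul, hcross, mul_zero, zero_add]
  constructor
  · rw [key]; ring
  · rw [key]
    have : 0 ≤ ∫ ω, (A ω - π) ^ 2 * (A ω * T ω) ^ 2 ∂μ :=
      integral_nonneg fun ω => mul_nonneg (sq_nonneg _) (sq_nonneg _)
    linarith
end

section
/- Let A be Bernoulli(π) independent of X, E(X)=0, Σ positive definite, and let Ω₁ = E(XY|A=1), Ω₀ = E(XY|A=0) with Ω₀ = −(1/2)Ω₁ and Ω₁ ≠ 0. Then with δ_f = Σ⁻¹(Ω₁ − Ω₀), γ_f = Σ⁻¹Ω₀, δ₁ = δ_f + γ_f, the quantity Ṽ₁ − Ṽ₂ = E[(γ_fᵀX + δ_fᵀX)²]/π + (δ_f+γ_f)ᵀΣ(δ_f−γ_f) equals (1+2π)Ω₁ᵀΣ⁻¹Ω₁/π > 0. That is, the empirically-centred interaction-only estimator can have strictly larger asymptotic variance than ANOVA. -/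
open MeasureTheory ProbabilityTheory Matrix

/-- empirically-centred interaction-only estimator vs ANOVA: with
`Ω₁ = E(XY|A=1)`, `Ω₀ = E(XY|A=0)`, `Ω₀ = -(1/2)Ω₁ ≠ 0`, `δ_f = Σ⁻¹(Ω₁-Ω₀)`,
`γ_f = Σ⁻¹Ω₀` and `δ₁ = δ_f + γ_f`, the difference of corrected asymptotic variances
`Ṽ₁ - Ṽ₂ = E[(γ_fᵀX + δ_fᵀX)²]/π + (δ_f+γ_f)ᵀΣ(δ_f-γ_f)` equals
`(1+2π) Ω₁ᵀΣ⁻¹Ω₁ / π > 0`. -/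
theorem stmt_14 {Ωs : Type*} [MeasurableSpace Ωs] (μ : Measure Ωs) [IsProbabilityMeasure μ]
    {p : ℕ} (π : ℝ) (hπ0 : 0 < π) (hπ1 : π < 1)
    (A Y : Ωs → ℝ) (X : Ωs → Fin p → ℝ)
    (hA01 : ∀ ω, A ω = 0 ∨ A ω = 1)
    (hAmean : ∫ ω, A ω ∂μ = π)
    (hindep : IndepFun A X μ)
    (hXmean : ∀ j, ∫ ω, X ω j ∂μ = 0)
    (hY : MemLp Y 2 μ) (hXL2 : ∀ j, MemLp (fun ω => X ω j) 2 μ)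
    (S : Matrix (Fin p) (Fin p) ℝ)
    (hS : ∀ j k, S j k = ∫ ω, X ω j * X ω k ∂μ) (hSpd : S.PosDef)
    (Ω₁ Ω₀ γf δf δ₁ : Fin p → ℝ)
    (hΩ₁ : ∀ j, Ω₁ j = (∫ ω, X ω j * Y ω * A ω ∂μ) / π)
    (hΩ₀ : ∀ j, Ω₀ j = (∫ ω, X ω j * Y ω * (1 - A ω) ∂μ) / (1 - π))
    (hrel : Ω₀ = -(1 / 2 : ℝ) • Ω₁) (hΩ₁ne : Ω₁ ≠ 0)
    (hγf : γf = S⁻¹ *ᵥ Ω₀) (hδf : δf = S⁻¹ *ᵥ (Ω₁ - Ω₀)) (hδ₁ : δ₁ = δf + γf) :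
    (∫ ω, ((∑ j, γf j * X ω j) + ∑ j, δf j * X ω j) ^ 2 ∂μ) / π
        + (δf + γf) ⬝ᵥ (S *ᵥ (δf - γf))
      = (1 + 2 * π) * (Ω₁ ⬝ᵥ (S⁻¹ *ᵥ Ω₁)) / π ∧
    0 < (∫ ω, ((∑ j, γf j * X ω j) + ∑ j, δf j * X ω j) ^ 2 ∂μ) / π
        + (δf + γf) ⬝ᵥ (S *ᵥ (δf - γf)) := by
  have hdet : IsUnit S.det := isUnit_iff_ne_zero.mpr hSpd.det_pos.ne'
  have hSinv : ∀ w : Fin p → ℝ, S *ᵥ (S⁻¹ *ᵥ w) = w := by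
    intro w
    rw [Matrix.mulVec_mulVec, Matrix.mul_nonsing_inv S hdet, Matrix.one_mulVec]
  set Q : ℝ := Ω₁ ⬝ᵥ (S⁻¹ *ᵥ Ω₁) with hQ
  have hv : γf + δf = S⁻¹ *ᵥ Ω₁ := by
    have h1 : Ω₀ + (Ω₁ - Ω₀) = Ω₁ := by abel
    rw [hγf, hδf, ← Matrix.mulVec_add, h1]
  have hdiff : δf - γf = S⁻¹ *ᵥ ((2:ℝ) • Ω₁) := by
    have h2 : (Ω₁ - Ω₀) - Ω₀ = (2:ℝ) • Ω₁ := by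
      rw [hrel]
      funext j
      simp only [Pi.sub_apply, Pi.smul_apply, Pi.neg_apply, smul_eq_mul, neg_mul]
      ring
    rw [hγf, hδf, ← Matrix.mulVec_sub, h2]
  have hintmul : ∀ j k : Fin p, Integrable (fun ω => X ω j * X ω k) μ := by
    intro j k
    have hj := (hXL2 j).integrable_sq
    have hk := (hXL2 k).integrable_sq
    have hm : AEStronglyMeasurable (fun ω => X ω j * X ω k) μ :=
      (hXL2 j).1.mul (hXL2 k).1
    refine ((hj.add hk).div_const 2).mono' hm (Filter.Eventually.of_forall fun ω => ?_)
    simp only [Real.norm_eq_abs, Pi.add_apply, abs_mul]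
    nlinarith [sq_nonneg (|X ω j| - |X ω k|), sq_abs (X ω j), sq_abs (X ω k),
      abs_nonneg (X ω j), abs_nonneg (X ω k)]
  have key : ∀ v : Fin p → ℝ, ∫ ω, (∑ j, v j * X ω j) ^ 2 ∂μ = v ⬝ᵥ (S *ᵥ v) := by
    intro v
    have hexp : ∀ ω, (∑ j, v j * X ω j) ^ 2
        = ∑ j, ∑ k, v j * v k * (X ω j * X ω k) := by
      intro ω
      rw [sq, Finset.sum_mul_sum]
      exact Finset.sum_congr rfl fun j _ => Finset.sum_congr rfl fun k _ => by ring
    simp_rw [hexp]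
    rw [integral_finset_sum _ (fun j _ =>
      integrable_finset_sum _ (fun k _ => ((hintmul j k).const_mul _)))]
    have hinner : ∀ j : Fin p, ∫ ω, ∑ k, v j * v k * (X ω j * X ω k) ∂μ
        = ∑ k, v j * v k * S j k := by
      intro j
      rw [integral_finset_sum _ (fun k _ => ((hintmul j k).const_mul _))]
      exact Finset.sum_congr rfl fun k _ => by rw [integral_const_mul, hS]
    simp_rw [hinner]
    simp only [dotProduct, Matrix.mulVec, Finset.mul_sum]
    exact Finset.sum_congr rfl fun j _ => Finset.sum_congr rfl fun k _ => by ring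
  have hsum_eq : ∀ ω, ((∑ j, γf j * X ω j) + ∑ j, δf j * X ω j)
      = ∑ j, (γf + δf) j * X ω j := by
    intro ω
    rw [← Finset.sum_add_distrib]
    exact Finset.sum_congr rfl fun j _ => by simp [add_mul]
  have hint1 : (∫ ω, ((∑ j, γf j * X ω j) + ∑ j, δf j * X ω j) ^ 2 ∂μ) = Q := by
    simp_rw [hsum_eq]
    rw [key, hv, hSinv, dotProduct_comm]
  have hterm2 : (δf + γf) ⬝ᵥ (S *ᵥ (δf - γf)) = 2 * Q := by
    rw [hdiff, hSinv, add_comm δf γf, hv, dotProduct_smul,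
      dotProduct_comm]
    simp [hQ]
  have hQpos : 0 < Q := by
    have h := hSpd.inv.dotProduct_mulVec_pos hΩ₁ne
    simpa using h
  constructor
  · rw [hint1, hterm2]
    field_simp
  · rw [hint1, hterm2]
    have : 0 < Q / π := div_pos hQpos hπ0
    linarith
end
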